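/- Let a, b, c, d be complex numbers with ad − bc ≠ 0. In ℂ[X, Y, Z], the ideal (aY + bZ, cY + dZ) ∩ (X, aY + bZ) ∩ (X, cY + dZ) equals the ideal (X(aY + bZ), X(cY + dZ), (aY + bZ)(cY + dZ)). -/

import Mathlib

noncomputable def X : MvPolynomial (Fin 3) ℂ := MvPolynomial.X 0
noncomputable def Y : MvPolynomial (Fin 3) ℂ := MvPolynomial.X 1
noncomputable def Z : MvPolynomial (Fin 3) ℂ := MvPolynomial.X 2

/-- The intersection in the standard coordinates. -/
lemma std13 : Ideal.span {Y, Z} ⊓ Ideal.span {X, Y} ⊓ Ideal.span {X, Z}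
    = Ideal.span {X * Y, X * Z, Y * Z} := by
  have hm : ∀ i j : Fin 3, (MvPolynomial.X i * MvPolynomial.X j : MvPolynomial (Fin 3) ℂ)
      = MvPolynomial.monomial (Finsupp.single i 1 + Finsupp.single j 1) 1 := by
    intro i j
    rw [← pow_one (MvPolynomial.X i), ← pow_one (MvPolynomial.X j),
      MvPolynomial.X_pow_eq_monomial, MvPolynomial.X_pow_eq_monomial,
      MvPolynomial.monomial_mul, mul_one]
  have h1 : ({Y, Z} : Set (MvPolynomial (Fin 3) ℂ)) = MvPolynomial.X '' {1, 2} := by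
    simp [Set.image_insert_eq, Y, Z]
  have h2 : ({X, Y} : Set (MvPolynomial (Fin 3) ℂ)) = MvPolynomial.X '' {0, 1} := by
    simp [Set.image_insert_eq, X, Y]
  have h3 : ({X, Z} : Set (MvPolynomial (Fin 3) ℂ)) = MvPolynomial.X '' {0, 2} := by
    simp [Set.image_insert_eq, X, Z]
  have h4 : ({X * Y, X * Z, Y * Z} : Set (MvPolynomial (Fin 3) ℂ)) =
      (fun s => MvPolynomial.monomial s (1 : ℂ)) ''
        {Finsupp.single 0 1 + Finsupp.single 1 1, Finsupp.single 0 1 + Finsupp.single 2 1,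
         Finsupp.single 1 1 + Finsupp.single 2 1} := by
    simp [Set.image_insert_eq, X, Y, Z, hm]
  ext f
  rw [h1, h2, h3, h4]
  simp only [Ideal.mem_inf, MvPolynomial.mem_ideal_span_X_image,
    MvPolynomial.mem_ideal_span_monomial_image]
  have hle : ∀ (i j : Fin 3) (m : Fin 3 →₀ ℕ), m i ≠ 0 → m j ≠ 0 → i ≠ j →
      Finsupp.single i 1 + Finsupp.single j 1 ≤ m := by
    intro i j m hi hj hij
    intro k
    simp only [Finsupp.add_apply]
    rcases eq_or_ne k i with rfl | hki
    · rw [Finsupp.single_eq_same, Finsupp.single_eq_of_ne' (Ne.symm hij)]; omega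
    · rw [Finsupp.single_eq_of_ne' (Ne.symm hki)]
      rcases eq_or_ne k j with rfl | hkj
      · rw [Finsupp.single_eq_same]; omega
      · rw [Finsupp.single_eq_of_ne' (Ne.symm hkj)]; omega
  constructor
  · rintro ⟨⟨hYZ, hXY⟩, hXZ⟩ m hm'
    obtain ⟨i, hi, hi0⟩ := hYZ m hm'
    obtain ⟨j, hj, hj0⟩ := hXY m hm'
    obtain ⟨k, hk, hk0⟩ := hXZ m hm'
    simp only [Set.mem_insert_iff, Set.mem_singleton_iff] at hi hj hk
    rcases hj with rfl | rfl
    · rcases hi with rfl | rfl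
      · exact ⟨_, Or.inl rfl, hle _ _ _ hj0 hi0 (by decide)⟩
      · exact ⟨_, Or.inr (Or.inl rfl), hle _ _ _ hj0 hi0 (by decide)⟩
    · rcases hk with rfl | rfl
      · exact ⟨_, Or.inl rfl, hle _ _ _ hk0 hj0 (by decide)⟩
      · exact ⟨_, Or.inr (Or.inr rfl), hle _ _ _ hj0 hk0 (by decide)⟩
  · rintro H
    have key : ∀ m ∈ f.support, (m 0 ≠ 0 ∧ m 1 ≠ 0) ∨ (m 0 ≠ 0 ∧ m 2 ≠ 0) ∨
        (m 1 ≠ 0 ∧ m 2 ≠ 0) := by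
      intro m hm'
      obtain ⟨s, hs, hsm⟩ := H m hm'
      simp only [Set.mem_insert_iff, Set.mem_singleton_iff] at hs
      have h0 := hsm 0
      have h1 := hsm 1
      have h2 := hsm 2
      rcases hs with rfl | rfl | rfl <;>
        simp_all [Finsupp.add_apply, Finsupp.single_apply] <;> omega
    refine ⟨⟨?_, ?_⟩, ?_⟩ <;> intro m hm' <;> rcases key m hm' with ⟨u, v⟩ | ⟨u, v⟩ | ⟨u, v⟩
    · exact ⟨1, by simp, v⟩
    · exact ⟨2, by simp, v⟩
    · exact ⟨1, by simp, u⟩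
    · exact ⟨0, by simp, u⟩
    · exact ⟨0, by simp, u⟩
    · exact ⟨1, by simp, u⟩
    · exact ⟨0, by simp, u⟩
    · exact ⟨0, by simp, u⟩
    · exact ⟨2, by simp, v⟩

lemma comb13 (p q u v u' v' : ℂ) (P Q : MvPolynomial (Fin 3) ℂ) :
    MvPolynomial.C p * (MvPolynomial.C u * P + MvPolynomial.C v * Q) +
      MvPolynomial.C q * (MvPolynomial.C u' * P + MvPolynomial.C v' * Q) =
    MvPolynomial.C (p * u + q * u') * P + MvPolynomial.C (p * v + q * v') * Q := by
  simp only [map_add, map_mul]; ring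

lemma combX13 (p q : ℂ) (hp : p = 1) (hq : q = 0) (P Q : MvPolynomial (Fin 3) ℂ) :
    MvPolynomial.C p * P + MvPolynomial.C q * Q = P := by simp [hp, hq]

lemma combY13 (p q : ℂ) (hp : p = 0) (hq : q = 1) (P Q : MvPolynomial (Fin 3) ℂ) :
    MvPolynomial.C p * P + MvPolynomial.C q * Q = Q := by simp [hp, hq]

/-- Substitution `X ↦ X`, `Y ↦ aY + bZ`, `Z ↦ cY + dZ`. -/
noncomputable def fwd13 (a b c d : ℂ) : MvPolynomial (Fin 3) ℂ →ₐ[ℂ] MvPolynomial (Fin 3) ℂ :=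
  MvPolynomial.aeval ![X, MvPolynomial.C a * Y + MvPolynomial.C b * Z,
    MvPolynomial.C c * Y + MvPolynomial.C d * Z]

lemma left13 (a b c d : ℂ) (h : a * d - b * c ≠ 0) :
    (fwd13 a b c d).comp
      (fwd13 (d / (a*d - b*c)) (-b / (a*d - b*c)) (-c / (a*d - b*c)) (a / (a*d - b*c)))
      = AlgHom.id ℂ _ := by
  apply MvPolynomial.algHom_ext
  intro i
  fin_cases i
  · simp [fwd13, X, Y, Z]
  · simp [fwd13, X, Y, Z]
    rw [comb13, combX13] <;> simp only [mul_div_assoc', div_mul_eq_mul_div, ← add_div, div_eq_iff h] <;> ring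
  · simp [fwd13, X, Y, Z]
    rw [comb13, combY13] <;> simp only [mul_div_assoc', div_mul_eq_mul_div, ← add_div, div_eq_iff h] <;> ring

lemma right13 (a b c d : ℂ) (h : a * d - b * c ≠ 0) :
    (fwd13 (d / (a*d - b*c)) (-b / (a*d - b*c)) (-c / (a*d - b*c)) (a / (a*d - b*c))).comp
      (fwd13 a b c d) = AlgHom.id ℂ _ := by
  apply MvPolynomial.algHom_ext
  intro i
  fin_cases i
  · simp [fwd13, X, Y, Z]
  · simp [fwd13, X, Y, Z]
    rw [comb13, combX13] <;> field_simp <;> ring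
  · simp [fwd13, X, Y, Z]
    rw [comb13, combY13] <;> simp only [mul_div_assoc', div_mul_eq_mul_div, ← add_div, div_eq_iff h] <;> ring

/-- The linear change of variables as an algebra automorphism. -/
noncomputable def T13 (a b c d : ℂ) (h : a * d - b * c ≠ 0) :
    MvPolynomial (Fin 3) ℂ ≃ₐ[ℂ] MvPolynomial (Fin 3) ℂ :=
  AlgEquiv.ofAlgHom (fwd13 a b c d)
    (fwd13 (d / (a*d - b*c)) (-b / (a*d - b*c)) (-c / (a*d - b*c)) (a / (a*d - b*c)))
    (left13 a b c d h) (right13 a b c d h)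

/-- For complex numbers `a, b, c, d` with `ad − bc ≠ 0`, in `ℂ[X, Y, Z]` the ideal
`(aY + bZ, cY + dZ) ∩ (X, aY + bZ) ∩ (X, cY + dZ)` equals
`(X(aY + bZ), X(cY + dZ), (aY + bZ)(cY + dZ))`. -/
theorem stmt13 (a b c d : ℂ) (h : a * d - b * c ≠ 0) :
    Ideal.span {MvPolynomial.C a * Y + MvPolynomial.C b * Z,
        MvPolynomial.C c * Y + MvPolynomial.C d * Z}
      ⊓ Ideal.span {X, MvPolynomial.C a * Y + MvPolynomial.C b * Z}
      ⊓ Ideal.span {X, MvPolynomial.C c * Y + MvPolynomial.C d * Z}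
      = Ideal.span {X * (MvPolynomial.C a * Y + MvPolynomial.C b * Z),
          X * (MvPolynomial.C c * Y + MvPolynomial.C d * Z),
          (MvPolynomial.C a * Y + MvPolynomial.C b * Z) *
            (MvPolynomial.C c * Y + MvPolynomial.C d * Z)} := by
  set e : MvPolynomial (Fin 3) ℂ ≃+* MvPolynomial (Fin 3) ℂ := (T13 a b c d h).toRingEquiv
    with he
  have heX : e X = X := by
    simp [he, T13, fwd13, X, MvPolynomial.aeval_X]
  have heY : e Y = MvPolynomial.C a * Y + MvPolynomial.C b * Z := by
    simp [he, T13, fwd13, X, Y, Z, MvPolynomial.aeval_X]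
  have heZ : e Z = MvPolynomial.C c * Y + MvPolynomial.C d * Z := by
    simp [he, T13, fwd13, X, Y, Z, MvPolynomial.aeval_X]
  have m1 : Ideal.span {MvPolynomial.C a * Y + MvPolynomial.C b * Z,
      MvPolynomial.C c * Y + MvPolynomial.C d * Z}
      = Ideal.map (e : MvPolynomial (Fin 3) ℂ →+* MvPolynomial (Fin 3) ℂ)
        (Ideal.span {Y, Z}) := by
    rw [Ideal.map_span]
    congr 1
    rw [Set.image_insert_eq, Set.image_singleton]
    simp only [RingHom.coe_coe] at *
    rw [heY, heZ]
  have m2 : Ideal.span {X, MvPolynomial.C a * Y + MvPolynomial.C b * Z}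
      = Ideal.map (e : MvPolynomial (Fin 3) ℂ →+* MvPolynomial (Fin 3) ℂ)
        (Ideal.span {X, Y}) := by
    rw [Ideal.map_span]
    congr 1
    rw [Set.image_insert_eq, Set.image_singleton]
    simp only [RingHom.coe_coe] at *
    rw [heX, heY]
  have m3 : Ideal.span {X, MvPolynomial.C c * Y + MvPolynomial.C d * Z}
      = Ideal.map (e : MvPolynomial (Fin 3) ℂ →+* MvPolynomial (Fin 3) ℂ)
        (Ideal.span {X, Z}) := by
    rw [Ideal.map_span]
    congr 1
    rw [Set.image_insert_eq, Set.image_singleton]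
    simp only [RingHom.coe_coe] at *
    rw [heX, heZ]
  have m4 : Ideal.span {X * (MvPolynomial.C a * Y + MvPolynomial.C b * Z),
          X * (MvPolynomial.C c * Y + MvPolynomial.C d * Z),
          (MvPolynomial.C a * Y + MvPolynomial.C b * Z) *
            (MvPolynomial.C c * Y + MvPolynomial.C d * Z)}
      = Ideal.map (e : MvPolynomial (Fin 3) ℂ →+* MvPolynomial (Fin 3) ℂ)
        (Ideal.span {X * Y, X * Z, Y * Z}) := by
    rw [Ideal.map_span]
    congr 1
    rw [Set.image_insert_eq, Set.image_insert_eq, Set.image_singleton]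
    simp only [RingHom.coe_coe] at *
    rw [map_mul, map_mul, map_mul, heX, heY, heZ]
  rw [m1, m2, m3, m4, Ideal.map_comap_of_equiv, Ideal.map_comap_of_equiv,
    Ideal.map_comap_of_equiv, Ideal.map_comap_of_equiv, ← Ideal.comap_inf, ← Ideal.comap_inf,
    std13]
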